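/- Let r be a positive integer, let w₁, w₂, … be integers with each wₙ > 1, and let σ₀, σ₁, σ₂, … be permutations of {1, 2, …, r} satisfying σ_{n+1} = σₙ^{w_{n+1}} for all n ≥ 0. Then there exists N such that for every n ≥ N, the length of each orbit (i.e., the cardinality of each cycle) of σₙ is relatively prime to w_{n'} for all n' > n. -/
import Mathlib


open Topology

/-- **Claim 4:** Given permutations `σ₀, σ₁, …` of `{1, …, r}` with
`σₙ₊₁ = σₙ ^ wₙ₊₁` (here `w n` denotes `wₙ₊₁` and `σ n` denotes `σₙ`), for all
sufficiently large `n` the length of each orbit of `σₙ` (the cardinality of the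
cycle through any point `j`, i.e. the minimal period of `σₙ` at `j`) is
relatively prime to `wₙ'` for all `n' > n`. -/
theorem orbit_length_coprime_eventually
    (r : ℕ) (hr : 0 < r) (w : ℕ → ℕ) (hw : ∀ n, 1 < w n)
    (σ : ℕ → Equiv.Perm (Fin r)) (hσ : ∀ n, σ (n + 1) = σ n ^ w n) :
    ∃ N : ℕ, ∀ n ≥ N, ∀ j : Fin r, ∀ m ≥ n,
      Nat.Coprime (Function.minimalPeriod (⇑(σ n)) j) (w m) := by
  set f : ℕ → ℕ := fun n => orderOf (σ n) with hf
  have hfpos : ∀ n, 0 < f n := fun n => orderOf_pos _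
  have hfsucc : ∀ n, f (n + 1) = f n / Nat.gcd (f n) (w n) := by
    intro n
    simp only [hf]
    rw [hσ n, orderOf_pow' (σ n) (by have := hw n; omega : w n ≠ 0)]
  have hstep : ∀ n, f (n + 1) ≤ f n := by
    intro n
    rw [hfsucc n]
    exact Nat.div_le_self _ _
  have hmono : ∀ m n, n ≤ m → f m ≤ f n := by
    intro m n h
    induction m with
    | zero => simp [Nat.le_zero.mp h]
    | succ k ih =>
      rcases Nat.eq_or_lt_of_le h with h' | h'
      · exact h' ▸ le_refl _
      · exact le_trans (hstep k) (ih (by omega))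
  -- the minimum of the range
  have hne : (Set.range f).Nonempty := ⟨f 0, 0, rfl⟩
  obtain ⟨N, hN⟩ : ∃ N, f N = sInf (Set.range f) := Nat.sInf_mem hne
  have hmin : ∀ n, f N ≤ f n := fun n => hN ▸ Nat.sInf_le ⟨n, rfl⟩
  have hconst : ∀ n ≥ N, f n = f N := fun n hn =>
    le_antisymm (hmono n N hn) (hmin n)
  refine ⟨N, fun n hn j m hm => ?_⟩
  have hgcd : Nat.gcd (f m) (w m) = 1 := by
    have h1 : f (m + 1) = f m := by
      rw [hconst (m + 1) (by omega), hconst m (by omega)]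
    rw [hfsucc m] at h1
    by_contra hne1
    have hg2 : 1 < Nat.gcd (f m) (w m) := by
      have : 0 < Nat.gcd (f m) (w m) := Nat.gcd_pos_of_pos_left _ (hfpos m)
      omega
    have := Nat.div_lt_self (hfpos m) hg2
    omega
  have hdvd : Function.minimalPeriod (⇑(σ n)) j ∣ f n := by
    apply Function.IsPeriodicPt.minimalPeriod_dvd
    show (⇑(σ n))^[f n] j = j
    rw [Equiv.Perm.iterate_eq_pow, pow_orderOf_eq_one]
    simp
  have hfn : f n = f m := by rw [hconst n hn, hconst m (le_trans hn hm)]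
  exact Nat.Coprime.coprime_dvd_left (hfn ▸ hdvd) hgcd
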